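/- Let R be a Dedekind domain with class group of order 2 and let α be an irreducible element of R that is not prime. Then ω(α) = 2: whenever α divides a product a₁⋯a_t of irreducibles, α divides a subproduct of at most two of them, and there is a product of two irreducibles divisible by α such that α divides neither factor. -/

import Mathlib

open scoped nonZeroDivisors

-- group lemma
lemma grp_eq_of_ne_one {G : Type*} [Group G] (h2 : Nat.card G = 2) {a b : G}
    (ha : a ≠ 1) (hb : b ≠ 1) : a = b := by
  classical
  have hfin : Finite G := Nat.finite_of_card_ne_zero (by omega)
  have : Fintype G := Fintype.ofFinite G
  by_contra hne
  have h3 : ({1, a, b} : Finset G).card = 3 := by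
    rw [Finset.card_insert_of_notMem (by simp [ha.symm, hb.symm]),
      Finset.card_insert_of_notMem (by simp [hne]), Finset.card_singleton]
  have hle := Finset.card_le_univ ({1, a, b} : Finset G)
  have hcard : Fintype.card G = 2 := by rw [← Nat.card_eq_fintype_card, h2]
  rw [h3, hcard] at hle
  omega

lemma key_factor {R : Type*} [CommRing R] [IsDomain R] [IsDedekindDomain R]
    (hclass : Nat.card (ClassGroup R) = 2)
    (α : R) (hα : Irreducible α) (hnp : ¬Prime α) :
    ∃ P Q : Ideal R, Prime P ∧ Prime Q ∧ Ideal.span {α} = P * Q := by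
  have hα0 : α ≠ 0 := hα.ne_zero
  have hI0 : Ideal.span {α} ≠ 0 := by
    simpa [Ideal.span_singleton_eq_bot] using hα0
  obtain ⟨s, hs, hsprod⟩ := UniqueFactorizationMonoid.exists_prime_factors (Ideal.span {α}) hI0
  rw [associated_iff_eq] at hsprod
  -- no member of s is principal
  have nonP : ∀ P ∈ s, ¬(P : Ideal R).IsPrincipal := by
    intro P hPs hPrin
    obtain ⟨p, hp⟩ := hPrin
    have hPp : P = Ideal.span {p} := hp
    have hPprime := hs P hPs
    have hp0 : p ≠ 0 := by
      rintro rfl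
      refine hPprime.ne_zero ?_
      rw [hPp, Ideal.zero_eq_bot, Ideal.span_singleton_eq_bot]
    have hpdvd : p ∣ α := by
      have hPdvd : P ∣ Ideal.span {α} := hsprod ▸ Multiset.dvd_prod hPs
      have := Ideal.le_of_dvd hPdvd
      rw [hPp] at this
      exact Ideal.span_singleton_le_span_singleton.mp this
    have hpprime : Prime p :=
      (Ideal.span_singleton_prime hp0).mp (hPp ▸ Ideal.isPrime_of_prime hPprime)
    obtain ⟨c, hc⟩ := hpdvd
    rcases hα.isUnit_or_isUnit hc with h | h
    · exact hpprime.not_unit h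
    · have hass : Associated p α := ⟨h.unit, by rw [IsUnit.unit_spec]; exact hc.symm⟩
      exact hnp (hass.prime hpprime)
  -- s has at least two members
  obtain ⟨P, hPs⟩ : ∃ P, P ∈ s := by
    rcases Multiset.empty_or_exists_mem s with rfl | h
    · exact absurd (by simpa [Ideal.span_singleton_eq_top] using hsprod.symm) hα.not_isUnit
    · exact h
  obtain ⟨t, rfl⟩ := Multiset.exists_cons_of_mem hPs
  obtain ⟨Q, hQt⟩ : ∃ Q, Q ∈ t := by
    rcases Multiset.empty_or_exists_mem t with rfl | h
    · exfalso
      apply hnp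
      have : Ideal.span {α} = P := by simpa using hsprod.symm
      have hPprime : Prime P := hs P (by simp)
      exact (Ideal.span_singleton_prime hα0).mp (this ▸ Ideal.isPrime_of_prime hPprime)
    · exact h
  obtain ⟨u, rfl⟩ := Multiset.exists_cons_of_mem hQt
  have hPprime : Prime P := hs P (by simp)
  have hQprime : Prime Q := hs Q (by simp)
  refine ⟨P, Q, hPprime, hQprime, ?_⟩
  -- class group argument: P*Q is principal
  have hPmem : P ∈ (Ideal R)⁰ := mem_nonZeroDivisors_iff_ne_zero.mpr hPprime.ne_zero
  have hQmem : Q ∈ (Ideal R)⁰ := mem_nonZeroDivisors_iff_ne_zero.mpr hQprime.ne_zero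
  have hgP : ClassGroup.mk0 ⟨P, hPmem⟩ ≠ 1 :=
    fun h => nonP P (by simp) ((ClassGroup.mk0_eq_one_iff hPmem).mp h)
  have hgQ : ClassGroup.mk0 ⟨Q, hQmem⟩ ≠ 1 :=
    fun h => nonP Q (by simp) ((ClassGroup.mk0_eq_one_iff hQmem).mp h)
  have hPQmem : P * Q ∈ (Ideal R)⁰ := mul_mem hPmem hQmem
  have hprin : (P * Q).IsPrincipal := by
    refine (ClassGroup.mk0_eq_one_iff hPQmem).mp ?_
    have heq : (⟨P * Q, hPQmem⟩ : (Ideal R)⁰) = ⟨P, hPmem⟩ * ⟨Q, hQmem⟩ := rfl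
    rw [heq, MonoidHom.map_mul, grp_eq_of_ne_one hclass hgP hgQ]
    have h2 : (ClassGroup.mk0 ⟨Q, hQmem⟩) ^ 2 = 1 := by
      rw [← hclass]; exact pow_card_eq_one'
    rwa [sq] at h2
  obtain ⟨β, hβ⟩ := hprin
  have hβspan : P * Q = Ideal.span {β} := hβ
  have hβdvd : β ∣ α := by
    have : P * Q ∣ Ideal.span {α} := hsprod ▸ ⟨u.prod, by rw [Multiset.prod_cons, Multiset.prod_cons, mul_assoc]⟩
    have := Ideal.le_of_dvd this
    rw [hβspan] at this
    exact Ideal.span_singleton_le_span_singleton.mp this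
  have hβnu : ¬IsUnit β := by
    intro h
    have : P * Q = ⊤ := by rw [hβspan, Ideal.span_singleton_eq_top]; exact h
    have hPtop : P = ⊤ := top_le_iff.mp (this ▸ Ideal.mul_le_left (I := P) (J := Q))
    exact (Ideal.isPrime_of_prime hPprime).ne_top hPtop
  obtain ⟨c, hc⟩ := hβdvd
  rcases hα.isUnit_or_isUnit hc with h | h
  · exact absurd h hβnu
  · have : Associated β α := ⟨h.unit, by rw [IsUnit.unit_spec]; exact hc.symm⟩
    rw [← Ideal.span_singleton_eq_span_singleton.mpr this, hβspan]

lemma span_dvd_span_iff {R : Type*} [CommRing R] [IsDomain R] [IsDedekindDomain R]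
    {a b : R} : Ideal.span {a} ∣ Ideal.span ({b} : Set R) ↔ a ∣ b := by
  rw [Ideal.dvd_iff_le, Ideal.span_singleton_le_span_singleton]

lemma sub2 {R : Type*} [CommRing R] [IsDomain R] [IsDedekindDomain R]
    {α : R} {P Q : Ideal R} (hP : Prime P) (hQ : Prime Q)
    (hPQ : Ideal.span {α} = P * Q)
    {ι : Type*} [DecidableEq ι] (s : Finset ι) (f : ι → R)
    (hdvd : α ∣ ∏ i ∈ s, f i) :
    ∃ T : Finset ι, T ⊆ s ∧ T.card ≤ 2 ∧ α ∣ ∏ i ∈ T, f i := by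
  have h1 : P * Q ∣ ∏ i ∈ s, Ideal.span {f i} := by
    rw [Ideal.prod_span_singleton, ← hPQ]
    exact span_dvd_span_iff.mpr hdvd
  have hPd : P ∣ ∏ i ∈ s, Ideal.span {f i} := (dvd_mul_right P Q).trans h1
  obtain ⟨i, his, hPi⟩ := hP.exists_mem_finset_dvd hPd
  obtain ⟨C, hC⟩ := hPi
  rw [← Finset.mul_prod_erase s _ his, hC, mul_assoc] at h1
  have hQd : Q ∣ C * ∏ j ∈ s.erase i, Ideal.span {f j} :=
    (mul_dvd_mul_iff_left hP.ne_zero).mp h1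
  rcases hQ.dvd_mul.mp hQd with hQC | hQrest
  · refine ⟨{i}, by simpa using his, by simp, ?_⟩
    rw [Finset.prod_singleton]
    refine span_dvd_span_iff.mp ?_
    rw [hPQ, hC]
    exact mul_dvd_mul_left P hQC
  · obtain ⟨j, hj, hQj⟩ := hQ.exists_mem_finset_dvd hQrest
    have hji : j ≠ i := (Finset.mem_erase.mp hj).1
    refine ⟨{i, j}, ?_, ?_, ?_⟩
    · intro x hx
      rcases Finset.mem_insert.mp hx with rfl | hx
      · exact his
      · exact Finset.mem_of_mem_erase (Finset.mem_singleton.mp hx ▸ hj)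
    · exact (Finset.card_insert_le _ _).trans (by simp)
    · rw [Finset.prod_pair hji.symm]
      refine span_dvd_span_iff.mp ?_
      rw [hPQ, ← Ideal.span_singleton_mul_span_singleton]
      exact mul_dvd_mul ⟨C, hC⟩ hQj

theorem omega_eq_two_of_class_number_two
    {R : Type*} [CommRing R] [IsDomain R] [IsDedekindDomain R]
    (hclass : Nat.card (ClassGroup R) = 2)
    (α : R) (hα : Irreducible α) (hnp : ¬Prime α) :
    (∀ (t : ℕ) (a : Fin t → R), (∀ i, Irreducible (a i)) → α ∣ ∏ i, a i →
        ∃ T : Finset (Fin t), T.card ≤ 2 ∧ α ∣ ∏ i ∈ T, a i) ∧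
      (∃ b c : R, Irreducible b ∧ Irreducible c ∧ α ∣ b * c ∧ ¬α ∣ b ∧ ¬α ∣ c) := by
  classical
  obtain ⟨P, Q, hP, hQ, hPQ⟩ := key_factor hclass α hα hnp
  refine ⟨?_, ?_⟩
  · intro t a _ hdvd
    obtain ⟨T, -, hc, hd⟩ := sub2 hP hQ hPQ Finset.univ a hdvd
    exact ⟨T, hc, hd⟩
  · obtain ⟨a, b, hab, hna, hnb⟩ : ∃ a b : R, α ∣ a * b ∧ ¬α ∣ a ∧ ¬α ∣ b := by
      by_contra h
      push_neg at h
      exact hnp ⟨hα.ne_zero, hα.not_isUnit, fun a b hd => or_iff_not_imp_left.mpr (h a b hd)⟩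
    have ha0 : a ≠ 0 := by rintro rfl; exact hna (dvd_zero α)
    have hb0 : b ≠ 0 := by rintro rfl; exact hnb (dvd_zero α)
    obtain ⟨fa, hfa, hfaprod⟩ := WfDvdMonoid.exists_factors a ha0
    obtain ⟨fb, hfb, hfbprod⟩ := WfDvdMonoid.exists_factors b hb0
    set m : Multiset R := fa + fb with hm
    have hmem : ∀ x ∈ m, Irreducible x ∧ ¬ α ∣ x := by
      intro x hx
      rcases Multiset.mem_add.mp hx with h | h
      · exact ⟨hfa x h, fun hd => hna (hd.trans ((Multiset.dvd_prod h).trans hfaprod.dvd))⟩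
      · exact ⟨hfb x h, fun hd => hnb (hd.trans ((Multiset.dvd_prod h).trans hfbprod.dvd))⟩
    have hmdvd : α ∣ m.prod := by
      rw [hm, Multiset.prod_add]
      exact ((hfaprod.mul_mul hfbprod).dvd_iff_dvd_right).mpr hab
    set l := m.toList with hl
    have hgetmem : ∀ i : Fin l.length, l.get i ∈ m := by
      intro i
      rw [← Multiset.mem_toList]
      exact l.get_mem i
    have hlprod : α ∣ ∏ i : Fin l.length, l.get i := by
      have h1 : ∏ i : Fin l.length, l.get i = l.prod := by
        simp [Fin.prod_univ_getElem]
      rw [h1, hl, Multiset.prod_toList]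
      exact hmdvd
    obtain ⟨T, -, hTc, hTd⟩ := sub2 hP hQ hPQ Finset.univ (fun i => l.get i) hlprod
    have hcases : T.card = 0 ∨ T.card = 1 ∨ T.card = 2 := by omega
    rcases hcases with h0 | h1 | h2
    · rw [Finset.card_eq_zero] at h0
      subst h0
      rw [Finset.prod_empty] at hTd
      exact absurd (isUnit_of_dvd_one hTd) hα.not_isUnit
    · obtain ⟨i, rfl⟩ := Finset.card_eq_one.mp h1
      rw [Finset.prod_singleton] at hTd
      exact absurd hTd (hmem _ (hgetmem i)).2
    · obtain ⟨i, j, hij, rfl⟩ := Finset.card_eq_two.mp h2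
      rw [Finset.prod_pair hij] at hTd
      exact ⟨l.get i, l.get j, (hmem _ (hgetmem i)).1, (hmem _ (hgetmem j)).1, hTd,
        (hmem _ (hgetmem i)).2, (hmem _ (hgetmem j)).2⟩
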